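/- Let R be a commutative ring and Y an arbitrary n×n matrix over R. Then in R[t] one has det(t·J − [[0, −Y], [Yᵀ, 0]]) = det(t·1ₙ − Y)², where [[0,−Y],[Yᵀ,0]] is the 2n×2n block matrix with upper-right block −Y and lower-left block Yᵀ. -/
import Mathlib


open Matrix Polynomial

/-- The sign of the permutation of `Fin n ⊕ Fin n` swapping the two summands is `(-1)^n`. -/
lemma sign_sumComm_fin (n : ℕ) :
    Equiv.Perm.sign (Equiv.sumComm (Fin n) (Fin n)) = (-1) ^ n := by
  have h := Equiv.Perm.sign_eq_sign_of_equiv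
    (Equiv.prodCongrRight (fun _ : Fin n => Equiv.swap false true))
    (Equiv.sumComm (Fin n) (Fin n))
    ((Equiv.prodComm (Fin n) Bool).trans (Equiv.boolProdEquivSum (Fin n)))
    (by rintro ⟨i, (_ | _)⟩ <;> simp [Equiv.swap_apply_def])
  rw [← h, Equiv.Perm.sign_prodCongrRight]
  simp

/-- The standard symplectic form matrix `J = [[0, −1ₙ], [1ₙ, 0]]`. -/
def Jmat (n : ℕ) (R : Type*) [CommRing R] :
    Matrix (Fin n ⊕ Fin n) (Fin n ⊕ Fin n) R :=
  Matrix.fromBlocks 0 (-1) 1 0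

/-- `det(t·J − [[0, −Y], [Yᵀ, 0]]) = det(t·1ₙ − Y)²` in `R[t]`. -/
theorem det_tJ_sub_antidiag_blocks {n : ℕ} (hn : 1 ≤ n) {R : Type*} [CommRing R]
    (Y : Matrix (Fin n) (Fin n) R) :
    ((X : R[X]) • Jmat n R[X] -
      (Matrix.fromBlocks 0 (-Y) Yᵀ 0).map (Polynomial.C : R → R[X])).det =
    ((X : R[X]) • (1 : Matrix (Fin n) (Fin n) R[X]) -
      Y.map (Polynomial.C : R → R[X])).det ^ 2 := by
  set A : Matrix (Fin n) (Fin n) R[X] :=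
    (X : R[X]) • (1 : Matrix (Fin n) (Fin n) R[X]) - Y.map (C : R → R[X]) with hA
  have hM : (X : R[X]) • Jmat n R[X] -
      (Matrix.fromBlocks 0 (-Y) Yᵀ 0).map (C : R → R[X]) =
      Matrix.fromBlocks 0 (-A) Aᵀ 0 := by
    ext (i | i) (j | j) <;>
      simp [Jmat, hA, Matrix.one_apply, apply_ite] <;> split_ifs <;> simp <;> ring
  have hswap : Matrix.fromBlocks (0 : Matrix (Fin n) (Fin n) R[X]) (-A) Aᵀ 0 =
      (Matrix.fromBlocks Aᵀ 0 0 (-A)).submatrix (Equiv.sumComm (Fin n) (Fin n)) id := by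
    ext (i | i) (j | j) <;> rfl
  rw [hM, hswap, Matrix.det_permute, sign_sumComm_fin, Matrix.det_fromBlocks_zero₂₁,
    Matrix.det_transpose, Matrix.det_neg]
  push_cast
  rw [Fintype.card_fin]
  have h1 : ((-1 : R[X]) ^ n) * ((-1 : R[X]) ^ n) = 1 := by
    rw [← pow_add, ← two_mul, pow_mul]; norm_num
  calc (-1 : R[X]) ^ n * (A.det * ((-1) ^ n * A.det))
      = ((-1) ^ n * (-1) ^ n) * A.det ^ 2 := by ring
    _ = A.det ^ 2 := by rw [h1, one_mul]
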